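/- arXiv:1606.03295 — 2 statements merged into one kernel-verified Lean document; each statement's English description precedes it below -/
import Mathlib

section
/- Let F ∈ ℝ^{m×m} be a symmetric positive definite matrix and let B_1, …, B_m ∈ ℝ^{q×q} be invertible matrices. Then the block matrix V ∈ ℝ^{qm×qm} whose (i,j)-th q×q block equals F_{ij} · B_iᵀ B_j is symmetric positive definite; that is, zᵀVz > 0 for every nonzero z ∈ ℝ^{qm}. -/
open Matrix

/-- `Nᴴ * N` is positive definite when `N.mulVec` is injective. -/
lemma aux_posDef_conjTranspose_mul_self {n : Type*} [Fintype n] [DecidableEq n]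
    (N : Matrix n n ℝ) (hN : Function.Injective N.mulVec) : (Nᴴ * N).PosDef := by
  refine Matrix.PosDef.of_dotProduct_mulVec_pos (isHermitian_conjTranspose_mul_self N) fun x hx => ?_
  have hNx : N *ᵥ x ≠ 0 := by
    intro h
    exact hx (hN (h.trans (Matrix.mulVec_zero N).symm))
  have : star x ⬝ᵥ (Nᴴ * N) *ᵥ x = star (N *ᵥ x) ⬝ᵥ (N *ᵥ x) := by
    rw [← Matrix.mulVec_mulVec, Matrix.dotProduct_mulVec, ← Matrix.star_mulVec]
  rw [this]
  simpa using (dotProduct_star_self_pos_iff (v := N *ᵥ x)).2 hNx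

/-- If `F ∈ ℝ^{m×m}` is symmetric positive definite and `B_1, …, B_m ∈ ℝ^{q×q}` are
invertible, then the block matrix `V` with `(i,j)`-th `q×q` block `F i j • (B i)ᵀ * (B j)`
is symmetric positive definite. -/
theorem blockMatrix_posDef {m q : ℕ} (F : Matrix (Fin m) (Fin m) ℝ) (hF : F.PosDef)
    (B : Fin m → Matrix (Fin q) (Fin q) ℝ) (hB : ∀ i, IsUnit (B i))
    (V : Matrix (Fin m × Fin q) (Fin m × Fin q) ℝ)
    (hV : ∀ ik jl : Fin m × Fin q, V ik jl = F ik.1 jl.1 * ((B ik.1)ᵀ * B jl.1) ik.2 jl.2) :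
    V.PosDef := by
  open scoped MatrixOrder in set S := CFC.sqrt F with hSdef
  open scoped MatrixOrder in have hSS : S * S = F := CFC.sqrt_mul_sqrt_self F hF.posSemidef.nonneg
  have hSsymm : ∀ a b, S a b = S b a := by
    intro a b
    open scoped MatrixOrder in have h := (CFC.sqrt_nonneg F).posSemidef.1
    exact congrFun (congrFun h b) a
  have hSunit : IsUnit S := by
    have hdet : IsUnit (S * S).det := by
      rw [hSS]; exact hF.isUnit.map detMonoidHom
    rw [Matrix.det_mul] at hdet
    exact (Matrix.isUnit_iff_isUnit_det S).2 (isUnit_of_mul_isUnit_left hdet)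
  set N : Matrix (Fin m × Fin q) (Fin m × Fin q) ℝ :=
    fun p r => S p.1 r.1 * B r.1 p.2 r.2 with hNdef
  have hVN : V = Nᴴ * N := by
    ext p r
    rw [hV]
    simp only [Matrix.mul_apply, conjTranspose_apply, transpose_apply, star_trivial]
    simp only [hNdef]
    rw [Fintype.sum_prod_type]
    have : ∀ a : Fin m, ∑ s : Fin q, (S a p.1 * B p.1 s p.2) * (S a r.1 * B r.1 s r.2)
        = (S a p.1 * S a r.1) * ∑ s : Fin q, B p.1 s p.2 * B r.1 s r.2 := by
      intro a
      rw [Finset.mul_sum]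
      exact Finset.sum_congr rfl fun s _ => by ring
    rw [Finset.sum_congr rfl fun a _ => this a, ← Finset.sum_mul]
    have hF' : ∑ a : Fin m, S a p.1 * S a r.1 = F p.1 r.1 := by
      rw [← hSS]
      rw [Matrix.mul_apply]
      exact Finset.sum_congr rfl fun a _ => by rw [hSsymm a p.1]
    rw [hF']
  have hker : ∀ x : Fin m × Fin q → ℝ, N *ᵥ x = 0 → x = 0 := by
    intro x hx
    set y : Fin m → Fin q → ℝ := fun j => B j *ᵥ (fun l => x (j, l)) with hy
    have h1 : ∀ s, S *ᵥ (fun j => y j s) = 0 := by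
      intro s
      funext a
      have h := congrFun hx (a, s)
      simp only [Matrix.mulVec, dotProduct, hNdef, Pi.zero_apply] at h ⊢
      rw [Fintype.sum_prod_type] at h
      rw [← h]
      refine Finset.sum_congr rfl fun j _ => ?_
      simp only [hy, Matrix.mulVec, dotProduct, Finset.mul_sum]
      exact Finset.sum_congr rfl fun l _ => by ring
    have hSinj := Matrix.mulVec_injective_iff_isUnit.2 hSunit
    have h2 : ∀ s j, y j s = 0 := by
      intro s j
      have h0 : (fun j => y j s) = 0 :=
        hSinj (by rw [Matrix.mulVec_zero]; exact h1 s)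
      exact congrFun h0 j
    have h3 : ∀ j, ∀ l, x (j, l) = 0 := by
      intro j
      have hBinj := Matrix.mulVec_injective_iff_isUnit.2 (hB j)
      have h0 : (fun l => x (j, l)) = 0 := by
        apply hBinj
        rw [Matrix.mulVec_zero]
        funext s
        exact h2 s j
      exact fun l => congrFun h0 l
    funext p
    exact h3 p.1 p.2
  have hNinj : Function.Injective N.mulVec := by
    intro u v huv
    have : u - v = 0 := hker (u - v) (by rw [Matrix.mulVec_sub, huv, sub_self])
    exact sub_eq_zero.1 this
  rw [hVN]
  exact aux_posDef_conjTranspose_mul_self N hNinj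
end

section
/- Let T be a set, let f : T × T → ℝ be a positive definite kernel, and let B : T → ℝ^{q×q} be a map such that B_t is invertible for every t ∈ T. Then K : T × T → ℝ^{q×q} defined by K(s,t) = f(s,t) · B_sᵀ B_t is a positive definite matrix-valued kernel. -/
open Matrix

/-- `f : T × T → ℝ` is a positive definite kernel if for every injective finite family of
points the associated Gram matrix is symmetric positive definite. -/
def IsPosDefKernel {T : Type*} (f : T → T → ℝ) : Prop :=
  ∀ (m : ℕ) (s : Fin m → T), Function.Injective s →
    (Matrix.of fun i j => f (s i) (s j)).PosDef

/-- `K : T × T → ℝ^{q×q}` is a positive definite matrix-valued kernel if for every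
injective finite family of points the associated block Gram matrix has positive quadratic
form on nonzero vectors. -/
def IsPosDefMatrixKernel {T : Type*} {q : ℕ} (K : T → T → Matrix (Fin q) (Fin q) ℝ) : Prop :=
  ∀ (m : ℕ) (s : Fin m → T), Function.Injective s →
    ∀ z : Fin m × Fin q → ℝ, z ≠ 0 →
      0 < z ⬝ᵥ ((Matrix.of fun ik jl : Fin m × Fin q => K (s ik.1) (s jl.1) ik.2 jl.2) *ᵥ z)

/-- The quadratic form of the block kernel matrix equals a double sum involving the
transformed vectors `B (s i) *ᵥ z i`. -/
lemma block_quadform_eq {T : Type*} {q m : ℕ} (f : T → T → ℝ)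
    (B : T → Matrix (Fin q) (Fin q) ℝ) (s : Fin m → T) (z : Fin m × Fin q → ℝ) :
    z ⬝ᵥ ((Matrix.of fun ik jl : Fin m × Fin q =>
        (f (s ik.1) (s jl.1) • ((B (s ik.1))ᵀ * B (s jl.1))) ik.2 jl.2) *ᵥ z)
      = ∑ i, ∑ j, f (s i) (s j) *
          ((B (s i) *ᵥ fun k => z (i, k)) ⬝ᵥ (B (s j) *ᵥ fun l => z (j, l))) := by
  have h1 : ∀ i j : Fin m,
      (B (s i) *ᵥ fun k => z (i, k)) ⬝ᵥ (B (s j) *ᵥ fun l => z (j, l))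
      = ∑ k, ∑ l, z (i, k) * (((B (s i))ᵀ * B (s j)) k l * z (j, l)) := by
    intro i j
    calc (B (s i) *ᵥ fun k => z (i, k)) ⬝ᵥ (B (s j) *ᵥ fun l => z (j, l))
        = ((fun k => z (i, k)) ᵥ* (B (s i))ᵀ) ⬝ᵥ (B (s j) *ᵥ fun l => z (j, l)) := by
          rw [vecMul_transpose]
      _ = (fun k => z (i, k)) ⬝ᵥ ((B (s i))ᵀ *ᵥ (B (s j) *ᵥ fun l => z (j, l))) := by
          rw [← dotProduct_mulVec]
      _ = (fun k => z (i, k)) ⬝ᵥ (((B (s i))ᵀ * B (s j)) *ᵥ fun l => z (j, l)) := by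
          rw [mulVec_mulVec]
      _ = ∑ k, ∑ l, z (i, k) * (((B (s i))ᵀ * B (s j)) k l * z (j, l)) := by
          simp [dotProduct, mulVec, Finset.mul_sum]
  simp only [h1]
  simp only [dotProduct, mulVec, Matrix.of_apply, Matrix.smul_apply, smul_eq_mul,
    Fintype.sum_prod_type, Finset.mul_sum, Finset.sum_mul]
  refine Finset.sum_congr rfl fun i _ => ?_
  rw [Finset.sum_comm]
  exact Finset.sum_congr rfl fun j _ => Finset.sum_congr rfl fun k _ =>
    Finset.sum_congr rfl fun l _ => by ring

/-- Swap a triple sum so the inner index becomes outermost. -/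
lemma sum_comm3 {M : Type*} [AddCommMonoid M] {a b c : ℕ} (g : Fin a → Fin b → Fin c → M) :
    ∑ i, ∑ j, ∑ r, g i j r = ∑ r, ∑ i, ∑ j, g i j r :=
  calc ∑ i, ∑ j, ∑ r, g i j r
      = ∑ i, ∑ r, ∑ j, g i j r := Finset.sum_congr rfl fun _ _ => Finset.sum_comm
    _ = ∑ r, ∑ i, ∑ j, g i j r := Finset.sum_comm

/-- Exchange formula: a kernel-weighted sum of dot products is a sum of quadratic forms. -/
lemma weighted_dot_eq_sum_quadform {q m : ℕ} (A : Matrix (Fin m) (Fin m) ℝ)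
    (w : Fin m → Fin q → ℝ) :
    ∑ i, ∑ j, A i j * (w i ⬝ᵥ w j) = ∑ r : Fin q, (fun i => w i r) ⬝ᵥ (A *ᵥ fun i => w i r) := by
  simp only [dotProduct, mulVec, Finset.mul_sum]
  rw [sum_comm3 fun i j r => A i j * (w i r * w j r)]
  exact Finset.sum_congr rfl fun r _ => Finset.sum_congr rfl fun i _ =>
    Finset.sum_congr rfl fun j _ => by ring

/-- If `f` is a positive definite kernel on `T` and `B_t` is invertible for every `t ∈ T`,
then `K(s,t) = f s t • (B_s)ᵀ * B_t` is a positive definite matrix-valued kernel. -/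
theorem posDefMatrixKernel_of_invertible {T : Type*} {q : ℕ}
    (f : T → T → ℝ) (hf : IsPosDefKernel f)
    (B : T → Matrix (Fin q) (Fin q) ℝ) (hB : ∀ s, IsUnit (B s)) :
    IsPosDefMatrixKernel (fun s t => f s t • ((B s)ᵀ * B t)) := by
  intro m s hs z hz
  have hA := hf m s hs
  set A : Matrix (Fin m) (Fin m) ℝ := Matrix.of fun i j => f (s i) (s j) with hAdef
  set w : Fin m → Fin q → ℝ := fun i => B (s i) *ᵥ fun k => z (i, k) with hw
  have key : z ⬝ᵥ ((Matrix.of fun ik jl : Fin m × Fin q =>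
      (f (s ik.1) (s jl.1) • ((B (s ik.1))ᵀ * B (s jl.1))) ik.2 jl.2) *ᵥ z)
      = ∑ r : Fin q, (fun i => w i r) ⬝ᵥ (A *ᵥ fun i => w i r) := by
    rw [block_quadform_eq f B s z, ← weighted_dot_eq_sum_quadform A w]
    exact Finset.sum_congr rfl fun i _ => Finset.sum_congr rfl fun j _ => rfl
  have hpos : z ⬝ᵥ ((Matrix.of fun ik jl : Fin m × Fin q =>
      (f (s ik.1) (s jl.1) • ((B (s ik.1))ᵀ * B (s jl.1))) ik.2 jl.2) *ᵥ z)
      = ∑ r : Fin q, (fun i => w i r) ⬝ᵥ (A *ᵥ fun i => w i r) := key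
  rw [show (fun s t => f s t • ((B s)ᵀ * B t)) = fun s t => f s t • ((B s)ᵀ * B t) from rfl]
  rw [key]
  -- find an index where z is nonzero
  obtain ⟨⟨i, k⟩, hik⟩ := Function.ne_iff.mp hz
  have hzi : (fun k => z (i, k)) ≠ 0 := fun h => hik (congrFun h k)
  have hwi : w i ≠ 0 := by
    intro h
    have hinj := Matrix.mulVec_injective_iff_isUnit.2 (hB (s i))
    have : B (s i) *ᵥ (fun k => z (i, k)) = B (s i) *ᵥ 0 := by
      rw [Matrix.mulVec_zero]; exact h
    exact hzi (hinj this)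
  obtain ⟨r₀, hr₀⟩ := Function.ne_iff.mp hwi
  refine Finset.sum_pos' (fun r _ => ?_) ⟨r₀, Finset.mem_univ r₀, ?_⟩
  · have := (posSemidef_iff_dotProduct_mulVec.mp hA.posSemidef).2 fun i => w i r
    simpa using this
  · have hv : (fun i => w i r₀) ≠ 0 := fun h => hr₀ (congrFun h i)
    have := (posDef_iff_dotProduct_mulVec.mp hA).2 (x := fun i => w i r₀) hv
    simpa using this
end
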